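/- Let X be a subset of a real normed vector space, Z a set, z_1,…,z_N ∈ Z, ℓ : X × Z → ℝ, R : X → ℝ, λ > 0, and β ≥ 0. Define L_N(x) = (1/N) Σ_{i=1}^{N} ℓ(x, z_i) + λ R(x) and, for a fixed j ∈ {1,…,N}, L_N^{\j}(x) = (1/N) Σ_{i≠j} ℓ(x, z_i) + λ R(x). Assume ℓ is β-Lipschitz in its first argument: |ℓ(x, z) − ℓ(x′, z)| ≤ β ‖x − x′‖ for all x, x′ ∈ X and z ∈ Z. Suppose x* minimizes L_N over X, x^{*\j} minimizes L_N^{\j} over X, and the quadratic growth condition λ ‖x* − x‖² ≤ L_N(x) − L_N(x*) holds for all x ∈ X. Then for every z ∈ Z, |ℓ(x*, z) − ℓ(x^{*\j}, z)| ≤ β²/(λ N); that is, regularized ERM is uniformly stable with stability constant β²/(λ N). -/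

import Mathlib

/-- Uniform stability of regularized ERM under quadratic growth: removing one sample
changes the loss on every point by at most `β² / (λ N)`. -/
theorem regularized_erm_uniform_stability {E : Type*} [NormedAddCommGroup E]
    [NormedSpace ℝ E] {Z : Type*} (X : Set E) (N : ℕ) (hN : 1 ≤ N) (zs : Fin N → Z)
    (ℓ : E → Z → ℝ) (R : E → ℝ) (lam β : ℝ) (hlam : 0 < lam) (hβ : 0 ≤ β)
    (j : Fin N) (LN LNj : E → ℝ)
    (hLN : ∀ x, LN x = (1 / (N : ℝ)) * ∑ i, ℓ x (zs i) + lam * R x)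
    (hLNj : ∀ x, LNj x =
      (1 / (N : ℝ)) * ∑ i ∈ Finset.univ.erase j, ℓ x (zs i) + lam * R x)
    (hlip : ∀ zz : Z, ∀ x ∈ X, ∀ x' ∈ X, |ℓ x zz - ℓ x' zz| ≤ β * ‖x - x'‖)
    (xstar : E) (hxstar : xstar ∈ X) (hxstarmin : ∀ x ∈ X, LN xstar ≤ LN x)
    (xj : E) (hxj : xj ∈ X) (hxjmin : ∀ x ∈ X, LNj xj ≤ LNj x)
    (hqg : ∀ x ∈ X, lam * ‖xstar - x‖ ^ 2 ≤ LN x - LN xstar) :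
    ∀ zz : Z, |ℓ xstar zz - ℓ xj zz| ≤ β ^ 2 / (lam * N) := by
  intro zz
  have hNpos : (0:ℝ) < N := by exact_mod_cast hN
  set d := ‖xstar - xj‖ with hd
  have hd0 : 0 ≤ d := norm_nonneg _
  have hsum : ∀ x, LN x = LNj x + (1/(N:ℝ)) * ℓ x (zs j) := by
    intro x
    rw [hLN, hLNj, ← Finset.sum_erase_add _ _ (Finset.mem_univ j)]
    ring
  have h2 : LNj xj ≤ LNj xstar := hxjmin xstar hxstar
  have hl := hlip (zs j) xj hxj xstar hxstar
  rw [norm_sub_rev, ← hd] at hl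
  have hl' : ℓ xj (zs j) - ℓ xstar (zs j) ≤ β * d := (abs_le.mp hl).2
  have h3 : LN xj - LN xstar ≤ (1/(N:ℝ)) * (β * d) := by
    rw [hsum xj, hsum xstar]
    have : (0:ℝ) < 1/(N:ℝ) := by positivity
    nlinarith
  have h1 := hqg xj hxj
  rw [← hd] at h1
  have key : lam * d ^ 2 ≤ (1/(N:ℝ)) * (β * d) := le_trans h1 h3
  have hdle : d ≤ β / (lam * N) := by
    rcases eq_or_lt_of_le hd0 with h | h
    · rw [← h]; positivity
    · have key' : (N:ℝ) * (lam * d ^ 2) ≤ (N:ℝ) * (1/(N:ℝ) * (β * d)) :=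
        mul_le_mul_of_nonneg_left key hNpos.le
      have key'' : (N:ℝ) * lam * d ^ 2 ≤ β * d := by
        calc (N:ℝ) * lam * d ^ 2 ≤ ↑N * (1 / ↑N * (β * d)) := by linarith [key']
          _ = β * d := by field_simp
      rw [le_div_iff₀ (by positivity)]
      nlinarith [mul_pos h h]
  have hfin := hlip zz xstar hxstar xj hxj
  rw [← hd] at hfin
  calc |ℓ xstar zz - ℓ xj zz| ≤ β * d := hfin
    _ ≤ β * (β / (lam * N)) := by nlinarith
    _ = β ^ 2 / (lam * N) := by ring
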